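/- arXiv:1409.4228 — 3 statements merged into one kernel-verified Lean document; each statement's English description precedes it below -/
import Mathlib

section
/- Let Φ : H → ℝ^n be a bounded linear map from a Hilbert space H, and suppose there exists a (k+1)-dimensional subspace Λ ⊆ H and a constant c > 0 such that ‖Φ f‖² ≥ c ‖f‖² for all f ∈ Λ. Then the self-adjoint operator Φ Φ* on ℝ^n has at least k+1 eigenvalues (counted with multiplicity) that are ≥ c; equivalently, the k-th smallest eigenvalue of 2I − Φ Φ* is at most 2 − c. -/
open Matrix BigOperators RealInnerProductSpace


lemma aux_exists_submodule (m n : ℕ) (h : m ≤ n) :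
    ∃ W : Submodule ℝ (EuclideanSpace ℝ (Fin n)), Module.finrank ℝ W = m := by
  classical
  let b := (EuclideanSpace.basisFun (Fin n) ℝ).toBasis
  refine ⟨Submodule.span ℝ (Set.range (b ∘ Fin.castLE h)), ?_⟩
  rw [finrank_span_eq_card (b.linearIndependent.comp _ (Fin.castLE_injective h))]
  simp

lemma aux_rayleigh_abs {n : ℕ}
    (T : EuclideanSpace ℝ (Fin n) →L[ℝ] EuclideanSpace ℝ (Fin n))
    (f : EuclideanSpace ℝ (Fin n)) (hf : f ≠ 0) :
    |⟪f, T f⟫ / ⟪f, f⟫| ≤ ‖T‖ := by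
  have hpos : (0:ℝ) < ⟪f, f⟫ := by
    rw [real_inner_self_eq_norm_sq]
    exact pow_pos (norm_pos_iff.mpr hf) 2
  rw [abs_div, abs_of_pos hpos, div_le_iff₀ hpos, real_inner_self_eq_norm_sq]
  calc |⟪f, T f⟫| ≤ ‖f‖ * ‖T f‖ := abs_real_inner_le_norm f (T f)
    _ ≤ ‖f‖ * (‖T‖ * ‖f‖) := by
        gcongr; exact T.le_opNorm f
    _ = ‖T‖ * ‖f‖ ^ 2 := by ring

/-- The `k`-th smallest eigenvalue of a self-adjoint operator on a Euclidean
space, via the Courant--Fischer min-max principle. -/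
noncomputable def kthEigOp {n : ℕ}
    (T : EuclideanSpace ℝ (Fin n) →L[ℝ] EuclideanSpace ℝ (Fin n)) (k : ℕ) : ℝ :=
  sInf {t : ℝ | ∃ Λ : Submodule ℝ (EuclideanSpace ℝ (Fin n)),
    Module.finrank ℝ Λ = k + 1 ∧
    t = sSup {r : ℝ | ∃ f ∈ Λ, f ≠ 0 ∧ r = ⟪f, T f⟫ / ⟪f, f⟫}}

set_option maxHeartbeats 1000000 in
/-- if `Φ : H → ℝⁿ` is a bounded linear map from a Hilbert space
and there is a `(k+1)`-dimensional subspace `Λ ⊆ H` with `‖Φ f‖² ≥ c ‖f‖²` on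
`Λ` for some `c > 0`, then `ΦΦ*` has at least `k+1` eigenvalues `≥ c`
(i.e. the `(n-1-k)`-th smallest eigenvalue of `ΦΦ*` is `≥ c`); equivalently
the `k`-th smallest eigenvalue of `2I - ΦΦ*` is at most `2 - c`. -/
theorem stmt2 {H : Type*} [NormedAddCommGroup H] [InnerProductSpace ℝ H]
    [CompleteSpace H] {n k : ℕ} (c : ℝ) (hc : 0 < c)
    (Φ : H →L[ℝ] EuclideanSpace ℝ (Fin n))
    (Λ : Submodule ℝ H) (hdim : Module.finrank ℝ Λ = k + 1)
    (hlow : ∀ f ∈ Λ, c * ‖f‖ ^ 2 ≤ ‖Φ f‖ ^ 2) :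
    c ≤ kthEigOp (Φ ∘L ContinuousLinearMap.adjoint Φ) (n - 1 - k) ∧
      kthEigOp ((2 : ℝ) • ContinuousLinearMap.id ℝ (EuclideanSpace ℝ (Fin n)) -
        Φ ∘L ContinuousLinearMap.adjoint Φ) k ≤ 2 - c := by
  classical
  have hΛfin : FiniteDimensional ℝ Λ := FiniteDimensional.of_finrank_eq_succ hdim
  set E := EuclideanSpace ℝ (Fin n)
  set L : Λ →ₗ[ℝ] E := Φ.toLinearMap.comp Λ.subtype with hL
  have hinj : Function.Injective L := by
    rw [← LinearMap.ker_eq_bot, eq_bot_iff]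
    intro x hx
    have hx0 : Φ (x : H) = 0 := hx
    have h1 := hlow (x : H) x.2
    rw [hx0] at h1
    simp only [norm_zero] at h1
    have : ‖(x : H)‖ = 0 := by
      by_contra hne
      have hpos : 0 < ‖(x : H)‖ := (norm_nonneg _).lt_of_ne (Ne.symm hne)
      nlinarith [mul_pos hc (pow_pos hpos 2)]
    have : (x : H) = 0 := norm_eq_zero.mp this
    simpa [Submodule.mem_bot] using Subtype.ext this
  set U : Submodule ℝ E := LinearMap.range L with hUdef
  have hU : Module.finrank ℝ U = k + 1 := by
    rw [LinearMap.finrank_range_of_inj hinj, hdim]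
  have hUmem : ∀ g ∈ U, ∃ f : H, f ∈ Λ ∧ Φ f = g := by
    intro g hg
    obtain ⟨x, hx⟩ := hg
    exact ⟨(x : H), x.2, hx⟩
  -- key estimate
  have key : ∀ g ∈ U, c * ‖g‖ ^ 2 ≤ ‖ContinuousLinearMap.adjoint Φ g‖ ^ 2 := by
    intro g hg
    obtain ⟨f, hfΛ, hfg⟩ := hUmem g hg
    by_cases hg0 : g = 0
    · simp [hg0]
    set a := ‖ContinuousLinearMap.adjoint Φ g‖
    have h1 : ⟪ContinuousLinearMap.adjoint Φ g, f⟫ = ‖g‖ ^ 2 := by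
      rw [ContinuousLinearMap.adjoint_inner_left, hfg, real_inner_self_eq_norm_sq]
    have h2 : ‖g‖ ^ 2 ≤ a * ‖f‖ := by
      rw [← h1]; exact real_inner_le_norm _ _
    have h3 : c * ‖f‖ ^ 2 ≤ ‖g‖ ^ 2 := by rw [← hfg]; exact hlow f hfΛ
    have hgpos : (0:ℝ) < ‖g‖ ^ 2 := pow_pos (norm_pos_iff.mpr hg0) 2
    have h4 : ‖g‖ ^ 2 * ‖g‖ ^ 2 ≤ (a * ‖f‖) * (a * ‖f‖) :=
      mul_le_mul h2 h2 (le_of_lt hgpos) (le_trans (le_of_lt hgpos) h2)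
    nlinarith [norm_nonneg f, norm_nonneg g, sq_nonneg a, hc.le]
  have hkn : k + 1 ≤ n := by
    have := Submodule.finrank_le U
    rw [hU, finrank_euclideanSpace_fin] at this
    exact this
  set T1 : E →L[ℝ] E := Φ ∘L ContinuousLinearMap.adjoint Φ with hT1
  set T2 : E →L[ℝ] E :=
    (2 : ℝ) • ContinuousLinearMap.id ℝ E - Φ ∘L ContinuousLinearMap.adjoint Φ with hT2
  -- Rayleigh sets
  have hRbdd : ∀ (T : E →L[ℝ] E) (W : Submodule ℝ E) (r : ℝ),
      r ∈ {r : ℝ | ∃ f ∈ W, f ≠ 0 ∧ r = ⟪f, T f⟫ / ⟪f, f⟫} → |r| ≤ ‖T‖ := by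
    rintro T W r ⟨f, _, hf0, rfl⟩
    exact aux_rayleigh_abs T f hf0
  have hRne : ∀ (T : E →L[ℝ] E) (W : Submodule ℝ E), W ≠ ⊥ →
      {r : ℝ | ∃ f ∈ W, f ≠ 0 ∧ r = ⟪f, T f⟫ / ⟪f, f⟫}.Nonempty := by
    intro T W hW
    obtain ⟨f, hfW, hf0⟩ := Submodule.exists_mem_ne_zero_of_ne_bot hW
    exact ⟨_, f, hfW, hf0, rfl⟩
  have hUne : U ≠ ⊥ := by
    intro h
    rw [h, finrank_bot] at hU
    omega
  simp only [kthEigOp]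
  constructor
  · -- part 1
    apply le_csInf
    · obtain ⟨W, hW⟩ := aux_exists_submodule (n - 1 - k + 1) n (by omega)
      exact ⟨_, W, hW, rfl⟩
    rintro t ⟨W, hWdim, rfl⟩
    -- intersection is nontrivial
    have hsum := Submodule.finrank_sup_add_finrank_inf_eq U W
    have hle : Module.finrank ℝ ↥(U ⊔ W) ≤ n := by
      have := Submodule.finrank_le (U ⊔ W)
      rwa [finrank_euclideanSpace_fin] at this
    have h5 : Module.finrank ℝ ↥(U ⊔ W) + Module.finrank ℝ ↥(U ⊓ W)
        = (k + 1) + (n - 1 - k + 1) := by rw [hsum, hU, hWdim]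
    have hinf : 0 < Module.finrank ℝ ↥(U ⊓ W) := by omega
    have hinfne : U ⊓ W ≠ ⊥ := by
      intro h
      rw [h, finrank_bot] at hinf
      omega
    obtain ⟨g, hgUW, hg0⟩ := Submodule.exists_mem_ne_zero_of_ne_bot hinfne
    have hgU : g ∈ U := hgUW.1
    have hgW : g ∈ W := hgUW.2
    have hgpos : (0:ℝ) < ⟪g, g⟫ := by
      rw [real_inner_self_eq_norm_sq]
      exact pow_pos (norm_pos_iff.mpr hg0) 2
    have hray : c ≤ ⟪g, T1 g⟫ / ⟪g, g⟫ := by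
      have hTg : ⟪g, T1 g⟫ = ‖ContinuousLinearMap.adjoint Φ g‖ ^ 2 := by
        rw [hT1]
        show ⟪g, Φ (ContinuousLinearMap.adjoint Φ g)⟫ = _
        rw [← ContinuousLinearMap.adjoint_inner_left, real_inner_self_eq_norm_sq]
      rw [hTg, le_div_iff₀ hgpos, real_inner_self_eq_norm_sq]
      exact key g hgU
    refine le_csSup_of_le ?_ ⟨g, hgW, hg0, rfl⟩ hray
    exact ⟨‖T1‖, fun r hr => (abs_le.mp (hRbdd T1 W r hr)).2⟩
  · -- part 2
    apply csInf_le_of_le (b := sSup {r : ℝ | ∃ f ∈ U, f ≠ 0 ∧ r = ⟪f, T2 f⟫ / ⟪f, f⟫})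
    · refine ⟨-‖T2‖, ?_⟩
      rintro t ⟨W, hWdim, rfl⟩
      have hWne : W ≠ ⊥ := by
        intro h
        rw [h, finrank_bot] at hWdim
        omega
      obtain ⟨r₀, hr₀⟩ := hRne T2 W hWne
      have : -‖T2‖ ≤ r₀ := (abs_le.mp (hRbdd T2 W r₀ hr₀)).1
      exact le_trans this (le_csSup ⟨‖T2‖, fun r hr => (abs_le.mp (hRbdd T2 W r hr)).2⟩ hr₀)
    · exact ⟨U, hU, rfl⟩
    · apply csSup_le (hRne T2 U hUne)
      rintro r ⟨g, hgU, hg0, rfl⟩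
      have hgpos : (0:ℝ) < ⟪g, g⟫ := by
        rw [real_inner_self_eq_norm_sq]
        exact pow_pos (norm_pos_iff.mpr hg0) 2
      have hTg : ⟪g, T2 g⟫ = 2 * ⟪g, g⟫ - ‖ContinuousLinearMap.adjoint Φ g‖ ^ 2 := by
        rw [hT2]
        show ⟪g, (2:ℝ) • g - Φ (ContinuousLinearMap.adjoint Φ g)⟫ = _
        rw [inner_sub_right, real_inner_smul_right,
          ← ContinuousLinearMap.adjoint_inner_left, real_inner_self_eq_norm_sq]
        rw [real_inner_self_eq_norm_sq]
      rw [hTg, div_le_iff₀ hgpos]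
      have := key g hgU
      rw [real_inner_self_eq_norm_sq] at *
      nlinarith
end

section
/- Let (M, μ) be a finite measure space and (U_v)_{v ∈ V} a finite family of measurable sets of positive measure such that μ-almost every point of M lies in exactly two of the sets U_v. Define Φ : L²(M, μ) → ℝ^V by Φ(f)(v) = μ(U_v)^{−1/2} ∫_{U_v} f dμ. Then the matrix 2I − Φ Φ* equals the normalized Laplacian of the weighted graph on vertex set V with edge weights ω({u,v}) = μ(U_u ∩ U_v). -/
open MeasureTheory BigOperators

variable {M : Type*} [MeasurableSpace M] {V : Type*} [Fintype V] [DecidableEq V]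

/-- `φ_v = μ(U_v)^{-1/2} 𝟙_{U_v}`. -/
noncomputable def phiFn (μ : Measure M) (U : V → Set M) (v : V) : M → ℝ :=
  Set.indicator (U v) (fun _ => 1 / Real.sqrt ((μ (U v)).toReal))

/-- The matrix of `ΦΦ*`, whose `(u,v)` entry is `∫ φ_u φ_v dμ`. -/
noncomputable def PhiPhiStar (μ : Measure M) (U : V → Set M) : Matrix V V ℝ :=
  fun u v => ∫ x, phiFn μ U u x * phiFn μ U v x ∂μ

/-- The weighted adjacency matrix `W({u,v}) = μ(U_u ∩ U_v)` (zero diagonal). -/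
noncomputable def Wcov (μ : Measure M) (U : V → Set M) : Matrix V V ℝ :=
  fun u v => if u = v then 0 else (μ (U u ∩ U v)).toReal

/-- The weighted degree `d_v^ω = ∑_{u ∼ v} μ(U_u ∩ U_v)`. -/
noncomputable def dcov (μ : Measure M) (U : V → Set M) (v : V) : ℝ :=
  ∑ u, Wcov μ U v u

/-- The normalized Laplacian `L = I - S^{-1/2} W S^{-1/2}` of the cover graph. -/
noncomputable def normLapCov (μ : Measure M) (U : V → Set M) : Matrix V V ℝ :=
  fun u v => (if u = v then 1 else 0) -
    Wcov μ U u v / Real.sqrt (dcov μ U u * dcov μ U v)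

lemma phiPhiStar_eq (μ : Measure M) (U : V → Set M) (hmeas : ∀ v, MeasurableSet (U v))
    (u v : V) :
    PhiPhiStar μ U u v = (μ (U u ∩ U v)).toReal /
      (Real.sqrt (μ (U u)).toReal * Real.sqrt (μ (U v)).toReal) := by
  unfold PhiPhiStar phiFn
  have h : ∀ x, Set.indicator (U u) (fun _ => 1 / Real.sqrt ((μ (U u)).toReal)) x *
      Set.indicator (U v) (fun _ => 1 / Real.sqrt ((μ (U v)).toReal)) x =
      Set.indicator (U u ∩ U v)
        (fun _ => 1 / Real.sqrt ((μ (U u)).toReal) * (1 / Real.sqrt ((μ (U v)).toReal))) x := by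
    intro x
    rw [Set.inter_indicator_mul]
  simp_rw [h]
  rw [integral_indicator_const _ ((hmeas u).inter (hmeas v))]
  simp [smul_eq_mul, measureReal_def]
  ring

lemma dcov_eq (μ : Measure M) [IsFiniteMeasure μ] (U : V → Set M)
    (hmeas : ∀ v, MeasurableSet (U v))
    (h2 : ∀ᵐ x ∂μ, {v | x ∈ U v}.ncard = 2) (v : V) :
    dcov μ U v = (μ (U v)).toReal := by
  classical
  have hint : ∀ s : Set M, MeasurableSet s →
      (μ s).toReal = ∫ x, s.indicator (fun _ => (1:ℝ)) x ∂μ := by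
    intro s hs
    rw [integral_indicator_const _ hs]; simp [measureReal_def]
  unfold dcov Wcov
  have hterm : ∀ u, (if v = u then (0:ℝ) else (μ (U v ∩ U u)).toReal) =
      ∫ x, (if v = u then (0:ℝ) else Set.indicator (U v ∩ U u) (fun _ => (1:ℝ)) x) ∂μ := by
    intro u
    split
    · simp
    · exact hint _ ((hmeas v).inter (hmeas u))
  simp_rw [hterm]
  rw [← integral_finset_sum]
  · rw [hint _ (hmeas v)]
    apply integral_congr_ae
    filter_upwards [h2] with x hx
    by_cases hxv : x ∈ U v
    · have hs : ({w | x ∈ U w} : Set V).ncard = (Finset.univ.filter (fun w => x ∈ U w)).card := by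
        rw [Set.ncard_eq_toFinset_card']
        congr 1
        ext w; simp
      set s := Finset.univ.filter (fun w => x ∈ U w) with hsdef
      have hcard : s.card = 2 := by rw [← hs]; exact hx
      have hvs : v ∈ s := by simp [hsdef, hxv]
      have key : ∀ u, (if v = u then (0:ℝ) else Set.indicator (U v ∩ U u) (fun _ => (1:ℝ)) x)
          = if u ∈ s.erase v then 1 else 0 := by
        intro u
        by_cases h1 : v = u
        · subst h1; simp
        · simp only [if_neg h1, Set.indicator_apply, Set.mem_inter_iff]
          by_cases h2u : x ∈ U u
          · simp [hxv, h2u, Finset.mem_erase, Ne.symm h1, hsdef]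
          · simp [h2u, hsdef, Finset.mem_erase]
      simp_rw [key]
      rw [Finset.sum_ite_mem, Finset.univ_inter, Finset.sum_const,
        Finset.card_erase_of_mem hvs, hcard]
      simp [Set.indicator_apply, hxv]
    · have key : ∀ u, (if v = u then (0:ℝ) else Set.indicator (U v ∩ U u) (fun _ => (1:ℝ)) x)
          = 0 := by
        intro u
        split
        · rfl
        · simp [Set.indicator_apply, hxv]
      simp_rw [key]
      simp [Set.indicator_apply, hxv]
  · intro u _
    split
    · exact integrable_zero _ _ _
    · exact (integrable_const (1:ℝ)).indicator ((hmeas v).inter (hmeas u))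

/-- for a finite measure space `(M, μ)` and a finite family of
measurable sets of positive measure covering `μ`-a.e. point exactly twice,
the matrix `2I - ΦΦ*` (with `Φ f (v) = μ(U_v)^{-1/2} ∫_{U_v} f dμ`) equals
the normalized Laplacian of the associated weighted graph. -/
theorem stmt3 (μ : Measure M) [IsFiniteMeasure μ] (U : V → Set M)
    (hmeas : ∀ v, MeasurableSet (U v))
    (hpos : ∀ v, 0 < μ (U v))
    (h2 : ∀ᵐ x ∂μ, {v | x ∈ U v}.ncard = 2) :
    ∀ u v, 2 * (if u = v then (1 : ℝ) else 0) - PhiPhiStar μ U u v =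
      normLapCov μ U u v := by
  classical
  intro u v
  have hpos' : ∀ w, 0 < (μ (U w)).toReal := fun w =>
    ENNReal.toReal_pos (hpos w).ne' (measure_ne_top μ _)
  rw [phiPhiStar_eq μ U hmeas]
  unfold normLapCov Wcov
  rw [dcov_eq μ U hmeas h2 u, dcov_eq μ U hmeas h2 v]
  by_cases huv : u = v
  · subst huv
    rw [if_pos rfl, if_pos rfl, Set.inter_self]
    have : Real.sqrt (μ (U u)).toReal * Real.sqrt (μ (U u)).toReal = (μ (U u)).toReal :=
      Real.mul_self_sqrt (hpos' u).le
    rw [this]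
    rw [div_self (hpos' u).ne']
    norm_num
  · rw [if_neg huv, if_neg huv, Real.sqrt_mul (hpos' u).le]
    ring
end

section
/- The first nonzero eigenvalue (Fiedler value) of the normalized Laplacian of the once-subdivided star graph S_d^1 (obtained from the star K_{1,d} by inserting one new vertex in the middle of each edge) is bounded below by a positive constant independent of d. -/
open Matrix BigOperators

/-- The `k`-th smallest eigenvalue of a symmetric matrix via min-max. -/
noncomputable def kthEig {W : Type*} [Fintype W] (A : Matrix W W ℝ) (k : ℕ) : ℝ :=
  sInf {t : ℝ | ∃ Λ : Submodule ℝ (W → ℝ), Module.finrank ℝ Λ = k + 1 ∧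
    t = sSup {r : ℝ | ∃ f ∈ Λ, f ≠ 0 ∧ r = (f ⬝ᵥ A.mulVec f) / (f ⬝ᵥ f)}}

/-- The once-subdivided star graph `S_d^1`: a center `c`, middle vertices
`m_1, …, m_d` and leaves `l_1, …, l_d`, with edges `{c, m_i}` and
`{m_i, l_i}`. -/
def subStar (d : ℕ) : SimpleGraph (Unit ⊕ Fin d ⊕ Fin d) where
  Adj x y :=
    (∃ i, x = Sum.inl () ∧ y = Sum.inr (Sum.inl i)) ∨
    (∃ i, y = Sum.inl () ∧ x = Sum.inr (Sum.inl i)) ∨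
    (∃ i, x = Sum.inr (Sum.inl i) ∧ y = Sum.inr (Sum.inr i)) ∨
    (∃ i, y = Sum.inr (Sum.inl i) ∧ x = Sum.inr (Sum.inr i))
  symm := by
    constructor
    intro x y h
    rcases h with ⟨i, h1, h2⟩ | ⟨i, h1, h2⟩ | ⟨i, h1, h2⟩ | ⟨i, h1, h2⟩
    · exact Or.inr (Or.inl ⟨i, h1, h2⟩)
    · exact Or.inl ⟨i, h1, h2⟩
    · exact Or.inr (Or.inr (Or.inr ⟨i, h1, h2⟩))
    · exact Or.inr (Or.inr (Or.inl ⟨i, h1, h2⟩))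
  loopless := by
    constructor
    intro x h
    rcases h with ⟨i, h1, h2⟩ | ⟨i, h1, h2⟩ | ⟨i, h1, h2⟩ | ⟨i, h1, h2⟩ <;>
      subst h1 <;> simp_all

instance (d : ℕ) : DecidableRel (subStar d).Adj := fun x y => by
  dsimp [subStar]; infer_instance

/-- The normalized Laplacian of a simple graph. -/
noncomputable def normLap {V : Type*} [Fintype V] [DecidableEq V]
    (G : SimpleGraph V) [DecidableRel G.Adj] : Matrix V V ℝ :=
  fun u v => (if u = v then 1 else 0) -
    (if G.Adj u v then 1 else 0) /
      (Real.sqrt (G.degree u) * Real.sqrt (G.degree v))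


lemma deg_c (d : ℕ) : (subStar d).degree (Sum.inl ()) = d := by
  rw [← SimpleGraph.card_neighborFinset_eq_degree]
  rw [show (subStar d).neighborFinset (Sum.inl ()) = Finset.univ.image (fun i => Sum.inr (Sum.inl i)) from ?_]
  · rw [Finset.card_image_of_injective _ (by intro a b h; simpa using h)]; simp
  · ext y; rw [SimpleGraph.mem_neighborFinset]; simp [subStar, eq_comm]

lemma deg_m (d : ℕ) (i : Fin d) : (subStar d).degree (Sum.inr (Sum.inl i)) = 2 := by
  rw [← SimpleGraph.card_neighborFinset_eq_degree]
  rw [show (subStar d).neighborFinset (Sum.inr (Sum.inl i)) = {Sum.inl (), Sum.inr (Sum.inr i)} from ?_]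
  · simp
  · ext y; rw [SimpleGraph.mem_neighborFinset]; simp [subStar, eq_comm]

lemma deg_l (d : ℕ) (i : Fin d) : (subStar d).degree (Sum.inr (Sum.inr i)) = 1 := by
  rw [← SimpleGraph.card_neighborFinset_eq_degree]
  rw [show (subStar d).neighborFinset (Sum.inr (Sum.inr i)) = {Sum.inr (Sum.inl i)} from ?_]
  · simp
  · ext y; rw [SimpleGraph.mem_neighborFinset]; simp [subStar, eq_comm]

section entries
variable (d : ℕ)

lemma nl_cc : normLap (subStar d) (Sum.inl ()) (Sum.inl ()) = 1 := by
  simp [normLap, subStar]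
lemma nl_cm (j : Fin d) : normLap (subStar d) (Sum.inl ()) (Sum.inr (Sum.inl j)) =
    -(Real.sqrt d * Real.sqrt 2)⁻¹ := by
  simp only [normLap, deg_c, deg_m]
  simp [subStar]
lemma nl_cl (j : Fin d) : normLap (subStar d) (Sum.inl ()) (Sum.inr (Sum.inr j)) = 0 := by
  simp [normLap, subStar]
lemma nl_mc (i : Fin d) : normLap (subStar d) (Sum.inr (Sum.inl i)) (Sum.inl ()) =
    -(Real.sqrt 2 * Real.sqrt d)⁻¹ := by
  simp only [normLap, deg_c, deg_m]
  simp [subStar]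
lemma nl_mm (i j : Fin d) : normLap (subStar d) (Sum.inr (Sum.inl i)) (Sum.inr (Sum.inl j)) =
    if i = j then 1 else 0 := by
  by_cases h : i = j <;> simp [normLap, subStar, h]
lemma nl_ml (i j : Fin d) : normLap (subStar d) (Sum.inr (Sum.inl i)) (Sum.inr (Sum.inr j)) =
    if i = j then -(Real.sqrt 2)⁻¹ else 0 := by
  rcases eq_or_ne i j with h | h
  · subst h; simp only [normLap, deg_m, deg_l]; simp [subStar]
  · simp only [normLap, deg_m, deg_l]; simp [subStar, h, h.symm]
lemma nl_lc (i : Fin d) : normLap (subStar d) (Sum.inr (Sum.inr i)) (Sum.inl ()) = 0 := by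
  simp [normLap, subStar]
lemma nl_lm (i j : Fin d) : normLap (subStar d) (Sum.inr (Sum.inr i)) (Sum.inr (Sum.inl j)) =
    if i = j then -(Real.sqrt 2)⁻¹ else 0 := by
  by_cases h : i = j <;> simp only [normLap, deg_m, deg_l] <;> simp [subStar, h, eq_comm]
lemma nl_ll (i j : Fin d) : normLap (subStar d) (Sum.inr (Sum.inr i)) (Sum.inr (Sum.inr j)) =
    if i = j then 1 else 0 := by
  by_cases h : i = j <;> simp [normLap, subStar, h]

end entries

lemma quad_eq (d : ℕ) (hd : 1 ≤ d) (f : Unit ⊕ Fin d ⊕ Fin d → ℝ) :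
    f ⬝ᵥ (normLap (subStar d)).mulVec f =
      ∑ i : Fin d, (f (Sum.inl ()) / Real.sqrt d - f (Sum.inr (Sum.inl i)) / Real.sqrt 2) ^ 2
      + ∑ i : Fin d, (f (Sum.inr (Sum.inl i)) / Real.sqrt 2 - f (Sum.inr (Sum.inr i))) ^ 2 := by
  have hdpos : (0:ℝ) < d := by exact_mod_cast hd
  have hdp : (d:ℝ) * ((Real.sqrt d)⁻¹ * (Real.sqrt d)⁻¹) = 1 := by
    rw [← mul_inv, Real.mul_self_sqrt hdpos.le]
    exact mul_inv_cancel₀ hdpos.ne'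
  have hq2 : 2 * ((Real.sqrt 2)⁻¹ * (Real.sqrt 2)⁻¹) = 1 := by
    rw [← mul_inv, Real.mul_self_sqrt (by norm_num)]
    norm_num
  simp only [dotProduct, mulVec, Fintype.sum_sum_type, Finset.univ_unique,
    Finset.sum_singleton, show (default : Unit) = () from rfl, nl_cc, nl_cm, nl_cl, nl_mc,
    nl_mm, nl_ml, nl_lc, nl_lm, nl_ll]
  simp only [ite_mul, zero_mul, mul_ite, mul_zero, Finset.sum_ite_eq, Finset.sum_ite_eq',
    Finset.mem_univ, if_true, mul_one, one_mul, mul_zero, Finset.sum_const_zero, add_zero,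
    zero_add]
  have ha2 : f (Sum.inl ()) * f (Sum.inl ()) =
      ∑ _i : Fin d, f (Sum.inl ()) * (Real.sqrt d)⁻¹ * (f (Sum.inl ()) * (Real.sqrt d)⁻¹) := by
    rw [Finset.sum_const, Finset.card_univ, Fintype.card_fin, nsmul_eq_mul]
    linear_combination (-(f (Sum.inl ()) * f (Sum.inl ()))) * hdp
  rw [mul_add, ha2, Finset.mul_sum, ← Finset.sum_add_distrib, ← Finset.sum_add_distrib,
    ← Finset.sum_add_distrib, ← Finset.sum_add_distrib]
  refine Finset.sum_congr rfl fun i _ => ?_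
  simp only [div_eq_mul_inv, _root_.mul_inv_rev]
  linear_combination (-(f (Sum.inr (Sum.inl i)) * f (Sum.inr (Sum.inl i)))) * hq2


lemma dot_self_eq (d : ℕ) (f : Unit ⊕ Fin d ⊕ Fin d → ℝ) :
    f ⬝ᵥ f = f (Sum.inl ()) ^ 2 + ∑ i : Fin d, f (Sum.inr (Sum.inl i)) ^ 2
      + ∑ i : Fin d, f (Sum.inr (Sum.inr i)) ^ 2 := by
  simp only [dotProduct, Fintype.sum_sum_type, Finset.univ_unique, Finset.sum_singleton,
    show (default : Unit) = () from rfl, ← sq]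
  ring

lemma quad_le (d : ℕ) (hd : 1 ≤ d) (f : Unit ⊕ Fin d ⊕ Fin d → ℝ) :
    f ⬝ᵥ (normLap (subStar d)).mulVec f ≤ 2 * (f ⬝ᵥ f) := by
  have hdpos : (0:ℝ) < d := by exact_mod_cast hd
  have hds : Real.sqrt d ^ 2 = d := Real.sq_sqrt hdpos.le
  have h2s : Real.sqrt 2 ^ 2 = 2 := Real.sq_sqrt (by norm_num)
  rw [quad_eq d hd f, dot_self_eq]
  have h1 : ∑ i : Fin d, (f (Sum.inl ()) / Real.sqrt d - f (Sum.inr (Sum.inl i)) / Real.sqrt 2) ^ 2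
      ≤ ∑ i : Fin d, (2 * (f (Sum.inl ()) ^ 2 / d) + f (Sum.inr (Sum.inl i)) ^ 2) := by
    refine Finset.sum_le_sum fun i _ => ?_
    have e1 : 2 * (f (Sum.inl ()) ^ 2 / (d:ℝ)) + f (Sum.inr (Sum.inl i)) ^ 2
        = 2 * (f (Sum.inl ()) / Real.sqrt d) ^ 2 + 2 * (f (Sum.inr (Sum.inl i)) / Real.sqrt 2) ^ 2 := by
      rw [div_pow, div_pow, hds, h2s]; ring
    rw [e1]
    nlinarith [sq_nonneg (f (Sum.inl ()) / Real.sqrt d + f (Sum.inr (Sum.inl i)) / Real.sqrt 2)]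
  have h2 : ∑ i : Fin d, (f (Sum.inr (Sum.inl i)) / Real.sqrt 2 - f (Sum.inr (Sum.inr i))) ^ 2
      ≤ ∑ i : Fin d, (f (Sum.inr (Sum.inl i)) ^ 2 + 2 * f (Sum.inr (Sum.inr i)) ^ 2) := by
    refine Finset.sum_le_sum fun i _ => ?_
    have e1 : (f (Sum.inr (Sum.inl i)) ^ 2 : ℝ) + 2 * f (Sum.inr (Sum.inr i)) ^ 2
        = 2 * (f (Sum.inr (Sum.inl i)) / Real.sqrt 2) ^ 2 + 2 * f (Sum.inr (Sum.inr i)) ^ 2 := by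
      rw [div_pow, h2s]; ring
    rw [e1]
    nlinarith [sq_nonneg (f (Sum.inr (Sum.inl i)) / Real.sqrt 2 + f (Sum.inr (Sum.inr i)))]
  have hc : ∑ _i : Fin d, (2 * (f (Sum.inl ()) ^ 2 / (d:ℝ))) = 2 * f (Sum.inl ()) ^ 2 := by
    rw [Finset.sum_const, Finset.card_univ, Fintype.card_fin, nsmul_eq_mul]
    field_simp
  rw [Finset.sum_add_distrib] at h1 h2
  rw [hc] at h1
  rw [← Finset.mul_sum] at h2
  linarith

lemma key_ineq (d : ℕ) (hd : 1 ≤ d) (f : Unit ⊕ Fin d ⊕ Fin d → ℝ)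
    (horth : f ⬝ᵥ (fun u => Real.sqrt ((subStar d).degree u)) = 0) :
    (1 - Real.sqrt 2 / 2) * (f ⬝ᵥ f) ≤ f ⬝ᵥ (normLap (subStar d)).mulVec f := by
  have hdpos : (0:ℝ) < d := by exact_mod_cast hd
  have hds : Real.sqrt d ^ 2 = d := Real.sq_sqrt hdpos.le
  have h2s : Real.sqrt 2 ^ 2 = 2 := Real.sq_sqrt (by norm_num)
  have hdsne : Real.sqrt d ≠ 0 := by positivity
  have h14 : (1.4:ℝ) ≤ Real.sqrt 2 := by
    nlinarith [Real.sqrt_nonneg 2, h2s]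
  set a := f (Sum.inl ()) with ha
  set b : Fin d → ℝ := fun i => f (Sum.inr (Sum.inl i)) with hb
  set e : Fin d → ℝ := fun i => f (Sum.inr (Sum.inr i)) with he
  set B := ∑ i, b i with hB
  set E := ∑ i, e i with hE
  set T := ∑ i, (b i - e i) ^ 2 with hT
  -- the orthogonality constraint
  have hC : a * Real.sqrt d + Real.sqrt 2 * B + E = 0 := by
    rw [← horth]
    simp only [dotProduct, Fintype.sum_sum_type, Finset.univ_unique, Finset.sum_singleton,
      show (default : Unit) = () from rfl, deg_c, deg_m, deg_l]
    push_cast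
    rw [Real.sqrt_one]
    simp only [mul_one, hB, hE, Finset.mul_sum]
    rw [show (∑ x : Fin d, f (Sum.inr (Sum.inl x)) * Real.sqrt 2) = ∑ x : Fin d, Real.sqrt 2 * b x from Finset.sum_congr rfl fun i _ => by rw [hb]; ring]
    ring
  -- per-summand identity facts
  have hp1 : ((Real.sqrt d)⁻¹) ^ 2 = ((d:ℝ))⁻¹ := by
    rw [inv_pow, hds]
  have hp2 : 2 * (Real.sqrt 2)⁻¹ = Real.sqrt 2 := by
    field_simp
    rw [h2s]
  have hp3 : 2 * ((Real.sqrt 2)⁻¹) ^ 2 = 1 := by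
    rw [inv_pow, h2s]; norm_num
  -- the quadratic form identity
  have hQ : f ⬝ᵥ (normLap (subStar d)).mulVec f
      = a ^ 2 - Real.sqrt 2 * (a / Real.sqrt d) * B + (Real.sqrt 2 / 2) * T
        + (1 - Real.sqrt 2 / 2) * (∑ i, b i ^ 2 + ∑ i, e i ^ 2) := by
    rw [quad_eq d hd f]
    have step : ∀ i : Fin d,
        (a / Real.sqrt d - b i / Real.sqrt 2) ^ 2 + (b i / Real.sqrt 2 - e i) ^ 2
        = a ^ 2 / d - Real.sqrt 2 * (a / Real.sqrt d) * b i
          + (Real.sqrt 2 / 2) * (b i - e i) ^ 2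
          + (1 - Real.sqrt 2 / 2) * (b i ^ 2 + e i ^ 2) := by
      intro i
      simp only [div_eq_mul_inv]
      linear_combination (a^2) * hp1 - (a * b i * (Real.sqrt d)⁻¹ + b i * e i) * hp2
        + (b i ^2) * hp3
    rw [← Finset.sum_add_distrib, Finset.sum_congr rfl fun i _ => step i]
    simp only [Finset.sum_add_distrib, Finset.sum_sub_distrib, ← Finset.mul_sum,
      Finset.sum_const, Finset.card_univ, Fintype.card_fin, nsmul_eq_mul, mul_add]
    rw [mul_div_cancel₀ _ (ne_of_gt hdpos)]
  -- Cauchy-Schwarz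
  have hCS : (B - E) ^ 2 ≤ (d:ℝ) * T := by
    have h := _root_.sq_sum_le_card_mul_sum_sq (s := (Finset.univ : Finset (Fin d)))
      (f := fun i => b i - e i)
    rw [Finset.sum_sub_distrib] at h
    simpa [hT, hB, hE] using h
  have hT0 : 0 ≤ T := Finset.sum_nonneg fun i _ => sq_nonneg _
  -- finish
  set α := a / Real.sqrt d with hα
  have haα : a = α * Real.sqrt d := by
    rw [hα, div_mul_cancel₀ _ hdsne]
  have ha2 : a ^ 2 = α ^ 2 * d := by rw [haα, mul_pow, hds]
  have hγ : (d:ℝ) * α + (Real.sqrt 2 * B + E) = 0 := by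
    have : α * Real.sqrt d * Real.sqrt d + Real.sqrt 2 * B + E = 0 := by
      rw [← haα]; exact hC
    linear_combination this - α * hds
  have hX : 0 ≤ (Real.sqrt 2 / 2) * (d:ℝ) * α ^ 2 - Real.sqrt 2 * α * B
      + (Real.sqrt 2 / 2) * T := by
    have hdX : (d:ℝ) * ((Real.sqrt 2 / 2) * (d:ℝ) * α ^ 2 - Real.sqrt 2 * α * B
        + (Real.sqrt 2 / 2) * T)
        = (Real.sqrt 2 / 2) * (Real.sqrt 2 * B + E) ^ 2
          + Real.sqrt 2 * (Real.sqrt 2 * B + E) * B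
          + (Real.sqrt 2 / 2) * ((d:ℝ) * T) := by
      linear_combination ((Real.sqrt 2 / 2) * ((d:ℝ) * α - (Real.sqrt 2 * B + E))
        - Real.sqrt 2 * B) * hγ
    by_contra hcon
    push_neg at hcon
    have hneg : (d:ℝ) * ((Real.sqrt 2 / 2) * (d:ℝ) * α ^ 2 - Real.sqrt 2 * α * B
        + (Real.sqrt 2 / 2) * T) < 0 := by
      have h := mul_pos hdpos (neg_pos.mpr hcon)
      rw [mul_neg] at h
      linarith
    rw [hdX] at hneg
    nlinarith [hCS, sq_nonneg (B + E), h14, h2s, sq_nonneg B, sq_nonneg E]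
  rw [hQ, dot_self_eq]
  have hrw : f (Sum.inl ()) = a := rfl
  have hrwb : ∀ i, f (Sum.inr (Sum.inl i)) = b i := fun i => rfl
  have hrwe : ∀ i, f (Sum.inr (Sum.inr i)) = e i := fun i => rfl
  simp only [hrw, hrwb, hrwe]
  rw [ha2]
  linarith [hX]

lemma dot_self_pos {W : Type*} [Fintype W] (f : W → ℝ) (hf : f ≠ 0) : 0 < f ⬝ᵥ f := by
  obtain ⟨u, hu⟩ := Function.ne_iff.1 hf
  simp only [dotProduct]
  exact Finset.sum_pos' (fun v _ => mul_self_nonneg _)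
    ⟨u, Finset.mem_univ u, mul_self_pos.2 hu⟩

lemma exists_orth {W : Type*} [Fintype W] (Λ : Submodule ℝ (W → ℝ))
    (h : Module.finrank ℝ Λ = 2) (w : W → ℝ) :
    ∃ f, f ∈ Λ ∧ f ≠ 0 ∧ f ⬝ᵥ w = 0 := by
  let φ : Λ →ₗ[ℝ] ℝ :=
    { toFun := fun x => (x : W → ℝ) ⬝ᵥ w
      map_add' := fun x y => by simp [add_dotProduct]
      map_smul' := fun c x => by simp [smul_dotProduct] }
  have hker : LinearMap.ker φ ≠ ⊥ := by
    apply LinearMap.ker_ne_bot_of_finrank_lt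
    rw [h, Module.finrank_self]
    norm_num
  obtain ⟨x, hx, hx0⟩ := (Submodule.ne_bot_iff _).1 hker
  refine ⟨(x : W → ℝ), x.2, ?_, ?_⟩
  · intro hc
    exact hx0 (Subtype.ext hc)
  · exact hx

theorem stmt16' : ∃ c₀ : ℝ, 0 < c₀ ∧ ∀ d : ℕ, 1 ≤ d →
    c₀ ≤ sInf {t : ℝ | ∃ Λ : Submodule ℝ ((Unit ⊕ Fin d ⊕ Fin d) → ℝ), Module.finrank ℝ Λ = 1 + 1 ∧
    t = sSup {r : ℝ | ∃ f ∈ Λ, f ≠ 0 ∧ r = (f ⬝ᵥ (normLap (subStar d)).mulVec f) / (f ⬝ᵥ f)}} := by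
  have h2s : Real.sqrt 2 ^ 2 = 2 := Real.sq_sqrt (by norm_num)
  have hc : (0:ℝ) < 1 - Real.sqrt 2 / 2 := by
    nlinarith [Real.sqrt_nonneg 2, h2s]
  refine ⟨1 - Real.sqrt 2 / 2, hc, fun d hd => ?_⟩
  apply le_csInf
  · -- the set of test values is nonempty
    have hcard : 2 ≤ Module.finrank ℝ ((Unit ⊕ Fin d ⊕ Fin d) → ℝ) := by
      rw [Module.finrank_pi]
      simp only [Fintype.card_sum, Fintype.card_unit, Fintype.card_fin]
      omega
    obtain ⟨v, hv⟩ := exists_linearIndependent_of_le_finrank hcard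
    exact ⟨_, Submodule.span ℝ (Set.range v),
      by rw [finrank_span_eq_card hv, Fintype.card_fin], rfl⟩
  · rintro t ⟨Λ, hΛ, rfl⟩
    obtain ⟨f, hfΛ, hf0, hforth⟩ :=
      exists_orth Λ hΛ (fun u => Real.sqrt ((subStar d).degree u))
    have hfpos := dot_self_pos f hf0
    have hbdd : BddAbove {r : ℝ | ∃ f ∈ Λ, f ≠ 0 ∧
        r = (f ⬝ᵥ (normLap (subStar d)).mulVec f) / (f ⬝ᵥ f)} := by
      refine ⟨2, ?_⟩
      rintro r ⟨g, hg, hg0, rfl⟩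
      rw [div_le_iff₀ (dot_self_pos g hg0)]
      exact quad_le d hd g
    have hmem : (f ⬝ᵥ (normLap (subStar d)).mulVec f) / (f ⬝ᵥ f) ∈
        {r : ℝ | ∃ f ∈ Λ, f ≠ 0 ∧
          r = (f ⬝ᵥ (normLap (subStar d)).mulVec f) / (f ⬝ᵥ f)} :=
      ⟨f, hfΛ, hf0, rfl⟩
    have hle : 1 - Real.sqrt 2 / 2 ≤ (f ⬝ᵥ (normLap (subStar d)).mulVec f) / (f ⬝ᵥ f) := by
      rw [le_div_iff₀ hfpos]
      exact key_ineq d hd f hforth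
    exact hle.trans (le_csSup hbdd hmem)

/-- the Fiedler value (first nonzero eigenvalue) of the
normalized Laplacian of the once-subdivided star graph `S_d^1` is bounded
below by a positive constant independent of `d`. -/
theorem stmt16 : ∃ c₀ : ℝ, 0 < c₀ ∧ ∀ d : ℕ, 1 ≤ d →
    c₀ ≤ kthEig (normLap (subStar d)) 1 := by
  simpa only [kthEig] using stmt16'
end
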